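/- Let Grid(M) ⊆ Av(41352) be a monotone grid class, and suppose rows r_1 < r_2 and columns c_1 < c_2 are such that cells (r_1,c_2), (r_2,c_1), (r_2,c_2) are nonempty and (r_2,c_2) is an Inc-cell. Then: (1) cell (r_1,c_2) is a Dec-cell; (2) every cell (r,c) with r_1 ≤ r ≤ r_2 and c ≥ c_2, other than (r_1,c_2) and (r_2,c_2), is empty; (3) every cell (r,c) with r ≤ r_1 and c_1 ≤ c ≤ c_2, other than (r_1,c_2), is empty. -/

import Mathlib

/-- A monotone gridding matrix with `k` columns and `ℓ` rows (rows numbered bottom to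
top): entry `none` is empty, `some true` is the class Inc, `some false` is Dec.
`M i j` is the entry in column `i`, row `j`. -/
abbrev GMatrix (k ℓ : ℕ) := Fin k → Fin ℓ → Option Bool

/-- The cell graph of a gridding matrix: the nonempty entries are the (effective)
vertices; two nonempty entries are adjacent if they share a row or a column and no
nonempty entry lies strictly between them. -/
def cellGraph {k ℓ : ℕ} (M : GMatrix k ℓ) : SimpleGraph (Fin k × Fin ℓ) :=
  SimpleGraph.fromRel (fun x y =>
    M x.1 x.2 ≠ none ∧ M y.1 y.2 ≠ none ∧
    ((x.1 = y.1 ∧ x.2 < y.2 ∧ ∀ j, x.2 < j → j < y.2 → M x.1 j = none) ∨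
     (x.2 = y.2 ∧ x.1 < y.1 ∧ ∀ i, x.1 < i → i < y.1 → M i x.2 = none)))
/-- The point at position `p` of the permutation `π` lies in the `(i,j)`-cell of the
gridding given by column boundaries `c` and row boundaries `r`. -/
def InCell {n k ℓ : ℕ} (c : Fin (k + 1) → ℕ) (r : Fin (ℓ + 1) → ℕ)
    (π : Equiv.Perm (Fin n)) (p : Fin n) (i : Fin k) (j : Fin ℓ) : Prop :=
  c i.castSucc ≤ p.val ∧ p.val < c i.succ ∧
  r j.castSucc ≤ (π p).val ∧ (π p).val < r j.succ

/-- `(c, r)` is an `M`-gridding of the permutation `π`: every nonempty cell of the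
gridding corresponds to a nonempty matrix entry, and the points in a cell with an
Inc (resp. Dec) entry form an increasing (resp. decreasing) pattern. -/
def IsGridding {n k ℓ : ℕ} (M : GMatrix k ℓ) (π : Equiv.Perm (Fin n))
    (c : Fin (k + 1) → ℕ) (r : Fin (ℓ + 1) → ℕ) : Prop :=
  Monotone c ∧ Monotone r ∧ c 0 = 0 ∧ c (Fin.last k) = n ∧
  r 0 = 0 ∧ r (Fin.last ℓ) = n ∧
  ∀ (i : Fin k) (j : Fin ℓ),
    (∀ p, InCell c r π p i j → M i j ≠ none) ∧
    (M i j = some true → ∀ p q, InCell c r π p i j → InCell c r π q i j →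
      p < q → π p < π q) ∧
    (M i j = some false → ∀ p q, InCell c r π p i j → InCell c r π q i j →
      p < q → π q < π p)

/-- The monotone grid class of `M`, at length `n`: permutations admitting an
`M`-gridding. -/
def GridClass {k ℓ : ℕ} (M : GMatrix k ℓ) (n : ℕ) : Set (Equiv.Perm (Fin n)) :=
  {π | ∃ c r, IsGridding M π c r}
/-- `π` contains the pattern `σ`: some subsequence of `π` is order-isomorphic to `σ`. -/
def Contains {n m : ℕ} (π : Equiv.Perm (Fin n)) (σ : Equiv.Perm (Fin m)) : Prop :=
  ∃ f : Fin m → Fin n, StrictMono f ∧ ∀ a b : Fin m, σ a < σ b ↔ π (f a) < π (f b)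

/-- The pattern 41352 (as a permutation of `Fin 5`, 0-indexed values `3,0,2,4,1`). -/
def perm41352 : Equiv.Perm (Fin 5) :=
  ⟨![3, 0, 2, 4, 1], ![1, 4, 2, 0, 3],
    by intro x; fin_cases x <;> rfl, by intro x; fin_cases x <;> rfl⟩

/-- Boundary sequence from a cell-index assignment. -/
def bnd {m : ℕ} (f : Fin 5 → Fin m) (j : Fin (m + 1)) : ℕ :=
  (Finset.univ.filter (fun q : Fin 5 => (f q : ℕ) < (j : ℕ))).card

lemma bnd_mono {m : ℕ} (f : Fin 5 → Fin m) : Monotone (bnd f) := by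
  intro a b hab
  apply Finset.card_le_card
  apply Finset.monotone_filter_right
  intro q _ hq
  exact lt_of_lt_of_le hq (by exact_mod_cast hab)

lemma bnd_zero {m : ℕ} (f : Fin 5 → Fin m) : bnd f 0 = 0 := by
  simp [bnd]

lemma bnd_last {m : ℕ} (f : Fin 5 → Fin m) : bnd f (Fin.last m) = 5 := by
  have : ∀ q : Fin 5, ((f q : ℕ) < ((Fin.last m : Fin (m+1)) : ℕ)) := fun q => (f q).isLt
  simp only [bnd]
  rw [Finset.filter_true_of_mem (fun q _ => this q)]
  simp

lemma bnd_le {m : ℕ} {f : Fin 5 → Fin m} (hf : Monotone f) (p : Fin 5) :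
    bnd f (f p).castSucc ≤ p.val := by
  have : (Finset.univ.filter (fun q : Fin 5 => (f q : ℕ) < ((f p).castSucc : ℕ)))
      ⊆ Finset.Iio p := by
    intro q hq
    simp only [Finset.mem_filter, Fin.coe_castSucc] at hq
    simp only [Finset.mem_Iio]
    by_contra h
    push_neg at h
    exact absurd (by exact_mod_cast hf h : (f p : ℕ) ≤ (f q : ℕ)) (not_le.mpr hq.2)
  calc bnd f (f p).castSucc ≤ (Finset.Iio p).card := Finset.card_le_card this
    _ = p.val := Fin.card_Iio p

lemma bnd_gt {m : ℕ} {f : Fin 5 → Fin m} (hf : Monotone f) (p : Fin 5) :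
    p.val < bnd f (f p).succ := by
  have : Finset.Iic p ⊆
      (Finset.univ.filter (fun q : Fin 5 => (f q : ℕ) < ((f p).succ : ℕ))) := by
    intro q hq
    simp only [Finset.mem_Iic] at hq
    simp only [Finset.mem_filter, Fin.val_succ]
    exact ⟨Finset.mem_univ q, Nat.lt_succ_of_le (by exact_mod_cast hf hq)⟩
  have h2 := Finset.card_le_card this
  rw [Fin.card_Iic] at h2
  simp only [bnd]
  omega

lemma bnd_eq {m : ℕ} {f : Fin 5 → Fin m} (hf : Monotone f) (p : Fin 5) (i : Fin m)
    (hle : bnd f i.castSucc ≤ p.val) (hlt : p.val < bnd f i.succ) : i = f p := by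
  by_contra h
  rcases lt_or_gt_of_ne h with hlt' | hgt
  · have hv : (i : ℕ) < (f p : ℕ) := hlt'
    have h1 : bnd f i.succ ≤ bnd f (f p).castSucc :=
      bnd_mono f (by rw [Fin.le_def, Fin.val_succ, Fin.coe_castSucc]; omega)
    have := bnd_le hf p
    omega
  · have hv : (f p : ℕ) < (i : ℕ) := hgt
    have h1 : bnd f (f p).succ ≤ bnd f i.castSucc :=
      bnd_mono f (by rw [Fin.le_def, Fin.val_succ, Fin.coe_castSucc]; omega)
    have := bnd_gt hf p
    omega

lemma exists_grid {k ℓ : ℕ} (M : GMatrix k ℓ) (cols : Fin 5 → Fin k) (ρ : Fin 5 → Fin ℓ)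
    (hcols : Monotone cols) (hρ : Monotone ρ)
    (ha : ∀ p : Fin 5, M (cols p) (ρ (perm41352 p)) ≠ none)
    (hb : ∀ p q : Fin 5, p < q → cols p = cols q → ρ (perm41352 p) = ρ (perm41352 q) →
      (perm41352 p < perm41352 q ↔ M (cols p) (ρ (perm41352 p)) = some true)) :
    perm41352 ∈ GridClass M 5 := by
  refine ⟨bnd cols, bnd ρ, bnd_mono cols, bnd_mono ρ, bnd_zero cols, bnd_last cols,
    bnd_zero ρ, bnd_last ρ, fun i j => ⟨?_, ?_, ?_⟩⟩
  · rintro p ⟨hp1, hp2, hp3, hp4⟩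
    obtain rfl := bnd_eq hcols p i hp1 hp2
    obtain rfl := bnd_eq hρ (perm41352 p) j hp3 hp4
    exact ha p
  · rintro hM p q ⟨hp1, hp2, hp3, hp4⟩ ⟨hq1, hq2, hq3, hq4⟩ hpq
    have e1 := bnd_eq hcols p i hp1 hp2
    have e2 := bnd_eq hρ (perm41352 p) j hp3 hp4
    have e3 := bnd_eq hcols q i hq1 hq2
    have e4 := bnd_eq hρ (perm41352 q) j hq3 hq4
    exact (hb p q hpq (e1 ▸ e3) (e2 ▸ e4)).mpr (by rw [← e1, ← e2]; exact hM)
  · rintro hM p q ⟨hp1, hp2, hp3, hp4⟩ ⟨hq1, hq2, hq3, hq4⟩ hpq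
    have e1 := bnd_eq hcols p i hp1 hp2
    have e2 := bnd_eq hρ (perm41352 p) j hp3 hp4
    have e3 := bnd_eq hcols q i hq1 hq2
    have e4 := bnd_eq hρ (perm41352 q) j hq3 hq4
    rcases lt_trichotomy (perm41352 p) (perm41352 q) with h | h | h
    · have := (hb p q hpq (e1 ▸ e3) (e2 ▸ e4)).mp h
      rw [← e1, ← e2, hM] at this
      exact absurd this (by simp)
    · exact absurd (perm41352.injective h) (ne_of_lt hpq)
    · exact h

lemma contains_self : Contains perm41352 perm41352 :=
  ⟨id, strictMono_id, fun _ _ => Iff.rfl⟩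

lemma mono5 {m : ℕ} (a b c d e : Fin m) (h1 : a ≤ b) (h2 : b ≤ c) (h3 : c ≤ d)
    (h4 : d ≤ e) : Monotone ![a, b, c, d, e] := by
  rw [Fin.monotone_iff_le_succ]
  intro i; fin_cases i <;> simpa

set_option maxHeartbeats 4000000 in
/-- Suppose `Grid(M) ⊆ Av(41352)`, rows `r1 < r2` and columns `c1 < c2` are such that
cells `(r1,c2)`, `(r2,c1)`, `(r2,c2)` are nonempty and `(r2,c2)` is an Inc-cell.  Then
`(r1,c2)` is a Dec-cell; every cell `(r,c)` with `r1 ≤ r ≤ r2`, `c ≥ c2` other than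
`(r1,c2)`, `(r2,c2)` is empty; and every cell `(r,c)` with `r ≤ r1`, `c1 ≤ c ≤ c2`
other than `(r1,c2)` is empty. -/
theorem av41352_grid_structure {k ℓ : ℕ} (M : GMatrix k ℓ)
    (hAv : ∀ n : ℕ, ∀ π ∈ GridClass M n, ¬ Contains π perm41352)
    (r1 r2 : Fin ℓ) (c1 c2 : Fin k) (hr : r1 < r2) (hc : c1 < c2)
    (h1 : M c2 r1 ≠ none) (h2 : M c1 r2 ≠ none) (h3 : M c2 r2 = some true) :
    M c2 r1 = some false ∧
    (∀ (cc : Fin k) (rr : Fin ℓ), r1 ≤ rr → rr ≤ r2 → c2 ≤ cc →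
      ¬(cc = c2 ∧ rr = r1) → ¬(cc = c2 ∧ rr = r2) → M cc rr = none) ∧
    (∀ (cc : Fin k) (rr : Fin ℓ), rr ≤ r1 → c1 ≤ cc → cc ≤ c2 →
      ¬(cc = c2 ∧ rr = r1) → M cc rr = none) := by
  have key : ∀ (cols : Fin 5 → Fin k) (ρ : Fin 5 → Fin ℓ), Monotone cols → Monotone ρ →
      (∀ p : Fin 5, M (cols p) (ρ (perm41352 p)) ≠ none) →
      (∀ p q : Fin 5, p < q → cols p = cols q → ρ (perm41352 p) = ρ (perm41352 q) →
        (perm41352 p < perm41352 q ↔ M (cols p) (ρ (perm41352 p)) = some true)) → False :=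
    fun cols ρ ha hb hcc hd =>
      hAv 5 perm41352 (exists_grid M cols ρ ha hb hcc hd) contains_self
  refine ⟨?_, ?_, ?_⟩
  · -- part 1 : (c2, r1) is Dec
    rcases hM : M c2 r1 with _ | b
    · exact absurd hM h1
    · cases b
      · rfl
      · exfalso
        refine key ![c1, c2, c2, c2, c2] ![r1, r1, r2, r2, r2]
          (mono5 _ _ _ _ _ hc.le le_rfl le_rfl le_rfl)
          (mono5 _ _ _ _ _ le_rfl hr.le le_rfl le_rfl) ?_ ?_
        · intro p
          fin_cases p <;> simp [perm41352, hM, h3] <;> assumption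
        · intro p q hpq hcol hrow
          clear key hAv
          fin_cases p <;> fin_cases q <;>
            simp_all (config := {decide := true}) [perm41352]
  · -- part 2
    intro cc rr hr1rr hrrr2 hc2cc hne1 hne2
    rcases hM : M cc rr with _ | b
    · rfl
    exfalso
    rcases eq_or_lt_of_le hc2cc with heq | hlt
    · subst heq
      have hlo : r1 < rr := lt_of_le_of_ne hr1rr (fun h => hne1 ⟨rfl, h.symm⟩)
      have hhi : rr < r2 := lt_of_le_of_ne hrrr2 (fun h => hne2 ⟨rfl, h⟩)
      cases b
      · -- Dec cell between
        refine key ![c1, c2, c2, c2, c2] ![r1, rr, rr, r2, r2]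
          (mono5 _ _ _ _ _ hc.le le_rfl le_rfl le_rfl)
          (mono5 _ _ _ _ _ hlo.le le_rfl hhi.le le_rfl) ?_ ?_
        · intro p
          fin_cases p <;> simp [perm41352, hM, h3] <;> assumption
        · intro p q hpq hcol hrow
          clear key hAv
          fin_cases p <;> fin_cases q <;>
            simp_all (config := {decide := true}) [perm41352]
      · -- Inc cell between
        refine key ![c1, c2, c2, c2, c2] ![rr, rr, r2, r2, r2]
          (mono5 _ _ _ _ _ hc.le le_rfl le_rfl le_rfl)
          (mono5 _ _ _ _ _ le_rfl hhi.le le_rfl le_rfl) ?_ ?_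
        · intro p
          fin_cases p <;> simp [perm41352, hM, h3] <;> assumption
        · intro p q hpq hcol hrow
          clear key hAv
          fin_cases p <;> fin_cases q <;>
            simp_all (config := {decide := true}) [perm41352]
    · -- strictly to the right
      refine key ![c1, c2, c2, c2, cc] ![r1, rr, r2, r2, r2]
        (mono5 _ _ _ _ _ hc.le le_rfl le_rfl hlt.le)
        (mono5 _ _ _ _ _ hr1rr hrrr2 le_rfl le_rfl) ?_ ?_
      · intro p
        fin_cases p <;> simp [perm41352, hM, h3] <;> assumption
      · intro p q hpq hcol hrow
        clear key hAv
        fin_cases p <;> fin_cases q <;>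
          simp_all (config := {decide := true}) [perm41352] <;>
          exact absurd (hc.trans hlt) (lt_irrefl _)
  · -- part 3
    intro cc rr hrrr1 hc1cc hccc2 hne
    rcases hM : M cc rr with _ | b
    · rfl
    exfalso
    refine key ![c1, cc, c2, c2, c2] ![rr, r1, r2, r2, r2]
      (mono5 _ _ _ _ _ hc1cc hccc2 le_rfl le_rfl)
      (mono5 _ _ _ _ _ hrrr1 hr.le le_rfl le_rfl) ?_ ?_
    · intro p
      fin_cases p <;> simp [perm41352, hM, h3] <;> assumption
    · intro p q hpq hcol hrow
      clear key hAv
      fin_cases p <;> fin_cases q <;>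
        simp_all (config := {decide := true}) [perm41352] <;>
        exact absurd hr (not_lt.mpr hrrr1)
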